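/- Let P be a finite poset without isolated points with at most three minimal points and at most three maximal points, and let C ⊆ E(P) be a 4-crown. Then C is a retract of P if and only if at least one of the four edges of C is not contained in any improper 4-crown of P. -/

import Mathlib

open Set

/-- Minimal points of a poset. -/
def LSet (α : Type*) [PartialOrder α] : Set α := {x | ∀ y, y ≤ x → y = x}

/-- Maximal points of a poset. -/
def USet (α : Type*) [PartialOrder α] : Set α := {x | ∀ y, x ≤ y → y = x}

/-- Extremal points. -/
def ESet (α : Type*) [PartialOrder α] : Set α := LSet α ∪ USet α

/-- Non-extremal (interior) points. -/
def MSet (α : Type*) [PartialOrder α] : Set α := (ESet α)ᶜ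

/-- No isolated points: every point is comparable to some other point. -/
def NoIsolated (α : Type*) [PartialOrder α] : Prop := ∀ x : α, ∃ y : α, x < y ∨ y < x

/-- Height one: every point is extremal and some strict comparability exists. -/
def HeightOne (α : Type*) [PartialOrder α] : Prop :=
  (∀ x : α, x ∈ ESet α) ∧ ∃ x y : α, x < y

/-- A 4-crown with minimal points a, b and maximal points v, w:
the comparabilities are exactly a<v, a<w, b<v, b<w. -/
def IsCrown {α : Type*} [PartialOrder α] (a b v w : α) : Prop :=
  a < v ∧ a < w ∧ b < v ∧ b < w ∧ ¬ a ≤ b ∧ ¬ b ≤ a ∧ ¬ v ≤ w ∧ ¬ w ≤ v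

/-- The inner of a 4-crown: [a,v] ∩ [b,w]. -/
def crownInner {α : Type*} [PartialOrder α] (a b v w : α) : Set α :=
  {m | a ≤ m ∧ m ≤ v} ∩ {m | b ≤ m ∧ m ≤ w}

/-- An improper 4-crown contained in the extremal points E(P). -/
def IsImproperCrownE {α : Type*} [PartialOrder α] (a b v w : α) : Prop :=
  IsCrown a b v w ∧ a ∈ ESet α ∧ b ∈ ESet α ∧ v ∈ ESet α ∧ w ∈ ESet α ∧
    (crownInner a b v w).Nonempty

/-- Inner points of improper 4-crowns contained in E(P). -/
def innerPts (α : Type*) [PartialOrder α] : Set α :=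
  {m | ∃ a b v w : α, IsImproperCrownE a b v w ∧ m ∈ crownInner a b v w}

/-- Ξ(m): union of all improper 4-crowns with inner point m. -/
def Xi {α : Type*} [PartialOrder α] (m : α) : Set α :=
  (LSet α ∩ {x | x ≤ m}) ∪ (USet α ∩ {x | m ≤ x})

/-- 4-crown bundles: maximal sets Ξ(m) with respect to inclusion. -/
def bundles (α : Type*) [PartialOrder α] : Set (Set α) :=
  {F | ∃ m ∈ innerPts α, F = Xi m ∧
    ∀ m' ∈ innerPts α, Xi m ⊆ Xi m' → Xi m' = Xi m}

/-- R is a retract of the poset on α. -/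
def IsRetract (α : Type*) [PartialOrder α] (R : Set α) : Prop :=
  ∃ r : α → α, Monotone r ∧ (∀ x, r (r x) = r x) ∧ Set.range r = R

/-- C is a retract of the induced subposet on Y. -/
def IsRetractIn {α : Type*} [PartialOrder α] (Y C : Set α) : Prop :=
  ∃ r : Y → Y, Monotone r ∧ (∀ x, r (r x) = r x) ∧
    Set.range r = {y : Y | (y : α) ∈ C}

/-- The comparability graph of the poset is connected. -/
def PosetConnected (α : Type*) [PartialOrder α] : Prop :=
  ∀ x y : α, Relation.ReflTransGen (fun u v => u ≤ v ∨ v ≤ u) x y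

/-- Minimal points of an induced subposet. -/
def minIn {α : Type*} [PartialOrder α] (S : Set α) : Set α :=
  {x ∈ S | ∀ y ∈ S, y ≤ x → y = x}

/-- Maximal points of an induced subposet. -/
def maxIn {α : Type*} [PartialOrder α] (S : Set α) : Set α :=
  {x ∈ S | ∀ y ∈ S, x ≤ y → y = x}


namespace Stmt13Aux

variable {α : Type*} [PartialOrder α]

lemma mem_LSet_of_lt {x y : α} (hx : x ∈ ESet α) (hxy : x < y) : x ∈ LSet α := by
  rcases hx with h | h
  · exact h
  · exact absurd (h y hxy.le) (fun e => hxy.ne' e)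

lemma mem_USet_of_lt {x y : α} (hy : y ∈ ESet α) (hxy : x < y) : y ∈ USet α := by
  rcases hy with h | h
  · exact absurd (h x hxy.le) (fun e => hxy.ne e)
  · exact h

lemma exists_max [Finite α] (x : α) : ∃ u ∈ USet α, x ≤ u := by
  obtain ⟨u, hu, hmax⟩ := Set.Finite.exists_maximalFor id {y | x ≤ y} (Set.toFinite _)
    ⟨x, le_refl x⟩
  exact ⟨u, fun z hz => le_antisymm (hmax (hu.trans hz) hz) hz, hu⟩

lemma exists_min [Finite α] (x : α) : ∃ l ∈ LSet α, l ≤ x := by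
  obtain ⟨l, hl, hmin⟩ := Set.Finite.exists_minimalFor id {y | y ≤ x} (Set.toFinite _)
    ⟨x, le_refl x⟩
  exact ⟨l, fun z hz => le_antisymm hz (hmin (hz.trans hl) hz), hl⟩

/-- Predicate: `v` is the only maximal point above `x`. -/
def Pv (v x : α) : Prop := ∀ u ∈ USet α, x ≤ u → u = v

/-- Predicate: `a` is the only minimal point below `x`. -/
def Pa (a x : α) : Prop := ∀ l ∈ LSet α, l ≤ x → l = a

/-- Predicate determining the `w`-block of the retraction. -/
def Pw (a v w x : α) : Prop := w ≤ x ∨ ∃ y, Pa a y ∧ ¬ Pv v y ∧ y ≤ x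

open Classical in
/-- The retraction onto the crown `{a,b,v,w}`. -/
noncomputable def retr (a b v w x : α) : α :=
  if Pv v x then v else if Pa a x then a else if Pw a v w x then w else b

lemma retract_of_free [Finite α]
    (a b v w : α) (hcrown : IsCrown a b v w)
    (ha : a ∈ ESet α) (hb : b ∈ ESet α) (hv : v ∈ ESet α) (hw : w ∈ ESet α)
    (hfree : ¬ ∃ a2 b2 v2 w2 : α, IsImproperCrownE a2 b2 v2 w2 ∧
          a ∈ ({a2, b2, v2, w2} : Set α) ∧ v ∈ ({a2, b2, v2, w2} : Set α)) :
    IsRetract α {a, b, v, w} := by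
  classical
  obtain ⟨hav, haw, hbv, hbw, hab, hba, hvw, hwv⟩ := hcrown
  have haL : a ∈ LSet α := mem_LSet_of_lt ha hav
  have hbL : b ∈ LSet α := mem_LSet_of_lt hb hbv
  have hvU : v ∈ USet α := mem_USet_of_lt hv hav
  have hwU : w ∈ USet α := mem_USet_of_lt hw haw
  have hP1up : ∀ {x y : α}, x ≤ y → Pv v x → Pv v y :=
    fun hxy h u hu hyu => h u hu (hxy.trans hyu)
  have hP2dn : ∀ {x y : α}, x ≤ y → Pa a y → Pa a x :=
    fun hxy h l hl hlx => h l hl (hlx.trans hxy)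
  have hP1le : ∀ {x : α}, Pv v x → x ≤ v := by
    intro x h
    obtain ⟨u, hu, hxu⟩ := exists_max x
    rw [← h u hu hxu]; exact hxu
  have hP2ge : ∀ {x : α}, Pa a x → a ≤ x := by
    intro x h
    obtain ⟨l, hl, hlx⟩ := exists_min x
    rw [← h l hl hlx]; exact hlx
  -- the key consequence of freeness of the edge (a,v)
  have hint : ∀ m, a ≤ m → m ≤ v → Pa a m ∨ Pv v m := by
    intro m ham hmv
    by_contra hc
    push_neg at hc
    obtain ⟨h2, h1⟩ := hc
    rw [Pa] at h2; push_neg at h2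
    obtain ⟨b', hb'L, hb'm, hb'a⟩ := h2
    rw [Pv] at h1; push_neg at h1
    obtain ⟨w', hw'U, hmw', hw'v⟩ := h1
    apply hfree
    have hnaw' : a ≠ w' := by
      rintro rfl
      exact hav.ne' (hw'U v hav.le)
    have hnb'v : b' ≠ v := by
      rintro rfl
      exact hav.ne (hb'L a hav.le)
    have hnb'w' : b' ≠ w' := by
      rintro rfl
      exact hb'a ((hb'L a (ham.trans hmw')).symm)
    refine ⟨a, b', v, w', ⟨⟨hav, ?_, ?_, ?_, ?_, ?_, ?_, ?_⟩,
      Or.inl haL, Or.inl hb'L, Or.inr hvU, Or.inr hw'U,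
      m, ⟨⟨ham, hmv⟩, hb'm, hmw'⟩⟩, by simp, by simp⟩
    · exact lt_of_le_of_ne (ham.trans hmw') hnaw'
    · exact lt_of_le_of_ne (hb'm.trans hmv) hnb'v
    · exact lt_of_le_of_ne (hb'm.trans hmw') hnb'w'
    · exact fun h => hb'a ((hb'L a h).symm)
    · exact fun h => hb'a (haL b' h)
    · exact fun h => hw'v (hvU w' h)
    · exact fun h => hw'v (hw'U v h).symm
  -- fixed points
  have hPvv : Pv v v := fun u hu huv => hvU u huv
  have hnPv_of : ∀ {x : α}, x ≤ w → ¬ Pv v x := by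
    intro x hxw h
    exact hwv (le_of_eq (h w hwU hxw))
  have hnPvA : ¬ Pv v a := hnPv_of haw.le
  have hnPvB : ¬ Pv v b := hnPv_of hbw.le
  have hnPvW : ¬ Pv v w := hnPv_of le_rfl
  have hPaa : Pa a a := fun l hl hla => haL l hla
  have hnPa_of : ∀ {x : α}, b ≤ x → ¬ Pa a x := by
    intro x hbx h
    exact hab (le_of_eq (h b hbL hbx).symm)
  have hnPaB : ¬ Pa a b := hnPa_of le_rfl
  have hnPaW : ¬ Pa a w := hnPa_of hbw.le
  have hPwW : Pw a v w w := Or.inl le_rfl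
  have hnPwB : ¬ Pw a v w b := by
    rintro (h | ⟨y, h2, h1, hyb⟩)
    · exact hwv (h.trans hbv.le)
    · exact hab ((hP2ge h2).trans hyb)
  have hrv : retr a b v w v = v := by simp only [retr]; rw [if_pos hPvv]
  have hra : retr a b v w a = a := by simp only [retr]; rw [if_neg hnPvA, if_pos hPaa]
  have hrw : retr a b v w w = w := by
    simp only [retr]; rw [if_neg hnPvW, if_neg hnPaW, if_pos hPwW]
  have hrb : retr a b v w b = b := by
    simp only [retr]; rw [if_neg hnPvB, if_neg hnPaB, if_neg hnPwB]
  have hval : ∀ x, retr a b v w x = v ∨ retr a b v w x = a ∨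
      retr a b v w x = w ∨ retr a b v w x = b := by
    intro x; simp only [retr]; split_ifs <;> tauto
  refine ⟨retr a b v w, ?_, ?_, ?_⟩
  · -- monotone
    intro x y hxy
    by_cases h1x : Pv v x
    · have h1y := hP1up hxy h1x
      simp only [retr]; rw [if_pos h1x, if_pos h1y]
    · by_cases h1y : Pv v y
      · simp only [retr]; rw [if_neg h1x, if_pos h1y]
        by_cases h2x : Pa a x
        · rw [if_pos h2x]; exact hav.le
        · by_cases h3x : Pw a v w x
          · exfalso
            rcases h3x with hwx | ⟨y', h2y', h1y', hy'x⟩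
            · exact hnPvW ((hwU y (hwx.trans hxy)) ▸ h1y)
            · have hax : a ≤ x := (hP2ge h2y').trans hy'x
              rcases hint x hax (hxy.trans (hP1le h1y)) with h | h
              · exact h2x h
              · exact h1x h
          · rw [if_neg h2x, if_neg h3x]; exact hbv.le
      · by_cases h2y : Pa a y
        · have h2x := hP2dn hxy h2y
          simp only [retr]; rw [if_neg h1x, if_pos h2x, if_neg h1y, if_pos h2y]
        · by_cases h2x : Pa a x
          · have h3y : Pw a v w y := Or.inr ⟨x, h2x, h1x, hxy⟩
            simp only [retr]
            rw [if_neg h1x, if_pos h2x, if_neg h1y, if_neg h2y, if_pos h3y]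
            exact haw.le
          · by_cases h3x : Pw a v w x
            · have h3y : Pw a v w y := by
                rcases h3x with h | ⟨y', hy'⟩
                · exact Or.inl (h.trans hxy)
                · exact Or.inr ⟨y', hy'.1, hy'.2.1, hy'.2.2.trans hxy⟩
              simp only [retr]
              rw [if_neg h1x, if_neg h2x, if_pos h3x, if_neg h1y, if_neg h2y, if_pos h3y]
            · simp only [retr]; rw [if_neg h1x, if_neg h2x, if_neg h3x]
              by_cases h3y : Pw a v w y
              · rw [if_neg h1y, if_neg h2y, if_pos h3y]; exact hbw.le
              · rw [if_neg h1y, if_neg h2y, if_neg h3y]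
  · -- idempotent
    intro x
    rcases hval x with h | h | h | h <;> rw [h] <;>
      first | exact hrv | exact hra | exact hrw | exact hrb
  · -- range
    ext t
    simp only [Set.mem_range, Set.mem_insert_iff, Set.mem_singleton_iff]
    constructor
    · rintro ⟨x, rfl⟩
      have := hval x
      tauto
    · rintro (h | h | h | h)
      exacts [⟨a, hra.trans h.symm⟩, ⟨b, hrb.trans h.symm⟩,
        ⟨v, hrv.trans h.symm⟩, ⟨w, hrw.trans h.symm⟩]

lemma crown_normalize {x y : α} (hyU : y ∈ USet α) (hxy : x < y)
    (h : ∃ a2 b2 v2 w2 : α, IsImproperCrownE a2 b2 v2 w2 ∧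
        x ∈ ({a2, b2, v2, w2} : Set α) ∧ y ∈ ({a2, b2, v2, w2} : Set α)) :
    ∃ b' w' m : α, b' ∈ LSet α ∧ w' ∈ USet α ∧ b' ≠ x ∧ w' ≠ y ∧
      x ≤ m ∧ m ≤ y ∧ b' ≤ m ∧ m ≤ w' := by
  obtain ⟨a2, b2, v2, w2, ⟨hc, hEa, hEb, hEv, hEw, m, hm⟩, hxm, hym⟩ := h
  obtain ⟨h12, h13, h23, h24, hnab, hnba, hnvw, hnwv⟩ := hc
  have ha2L : a2 ∈ LSet α := mem_LSet_of_lt hEa h12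
  have hb2L : b2 ∈ LSet α := mem_LSet_of_lt hEb h23
  have hv2U : v2 ∈ USet α := mem_USet_of_lt hEv h12
  have hw2U : w2 ∈ USet α := mem_USet_of_lt hEw h13
  obtain ⟨⟨ham, hmv⟩, hbm, hmw⟩ := hm
  simp only [Set.mem_insert_iff, Set.mem_singleton_iff] at hxm hym
  have hne_ba : b2 ≠ a2 := fun e => hnba (le_of_eq e)
  have hne_ab : a2 ≠ b2 := fun e => hnab (le_of_eq e)
  have hne_wv : w2 ≠ v2 := fun e => hnwv (le_of_eq e)
  have hne_vw : v2 ≠ w2 := fun e => hnvw (le_of_eq e)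
  have hxab : x = a2 ∨ x = b2 := by
    rcases hxm with rfl | rfl | rfl | rfl
    · exact Or.inl rfl
    · exact Or.inr rfl
    · exact absurd (hv2U y hxy.le) hxy.ne'
    · exact absurd (hw2U y hxy.le) hxy.ne'
  have hyvw : y = v2 ∨ y = w2 := by
    rcases hym with rfl | rfl | rfl | rfl
    · exact absurd (hyU v2 h12.le) h12.ne'
    · exact absurd (hyU v2 h23.le) h23.ne'
    · exact Or.inl rfl
    · exact Or.inr rfl
  rcases hxab with rfl | rfl <;> rcases hyvw with rfl | rfl
  · exact ⟨b2, w2, m, hb2L, hw2U, hne_ba, hne_wv, ham, hmv, hbm, hmw⟩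
  · exact ⟨b2, v2, m, hb2L, hv2U, hne_ba, hne_vw, ham, hmw, hbm, hmv⟩
  · exact ⟨a2, w2, m, ha2L, hw2U, hne_ab, hne_wv, hbm, hmv, ham, hmw⟩
  · exact ⟨a2, v2, m, ha2L, hv2U, hne_ab, hne_vw, hbm, hmw, ham, hmv⟩

lemma edge_force {r : α → α} {a b v w : α} (hmono : Monotone r)
    (hmem : ∀ x, r x = a ∨ r x = b ∨ r x = v ∨ r x = w)
    (hfa : r a = a) (hfb : r b = b) (hfv : r v = v) (hfw : r w = w)
    (hcrown : IsCrown a b v w) (hvU : v ∈ USet α)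
    (hcov : ∃ a2 b2 v2 w2 : α, IsImproperCrownE a2 b2 v2 w2 ∧
        a ∈ ({a2, b2, v2, w2} : Set α) ∧ v ∈ ({a2, b2, v2, w2} : Set α)) :
    (∃ c, c ∈ LSet α ∧ c ≠ a ∧ c ≠ b ∧ r c = a) ∨
    (∃ u, u ∈ USet α ∧ u ≠ v ∧ u ≠ w ∧ r u = v) := by
  obtain ⟨hav, haw, hbv, hbw, hab, hba, hvw, hwv⟩ := hcrown
  obtain ⟨b', w', m, hb'L, hw'U, hb'a, hw'v, ham, hmv, hb'm, hmw'⟩ :=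
    crown_normalize hvU hav hcov
  have h1 : a ≤ r m := hfa ▸ hmono ham
  have h2 : r m ≤ v := hfv ▸ hmono hmv
  rcases hmem m with hm | hm | hm | hm
  · -- r m = a, hence r b' = a
    left
    have h3 : r b' ≤ a := hm ▸ hmono hb'm
    have h4 : r b' = a := by
      rcases hmem b' with h | h | h | h
      · exact h
      · exact absurd (h ▸ h3) hba
      · exact absurd (h ▸ h3) hav.not_ge
      · exact absurd (h ▸ h3) haw.not_ge
    refine ⟨b', hb'L, hb'a, fun e => ?_, h4⟩
    exact hab (le_of_eq (hfb.symm.trans (e ▸ h4)).symm)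
  · exact absurd (hm ▸ h1) hab
  · -- r m = v, hence r w' = v
    right
    have h3 : v ≤ r w' := hm ▸ hmono hmw'
    have h4 : r w' = v := by
      rcases hmem w' with h | h | h | h
      · exact absurd (h ▸ h3) hav.not_ge
      · exact absurd (h ▸ h3) hbv.not_ge
      · exact h
      · exact absurd (h ▸ h3) hvw
    refine ⟨w', hw'U, hw'v, fun e => ?_, h4⟩
    exact hvw (le_of_eq (hfw.symm.trans (e ▸ h4)).symm)
  · exact absurd (hm ▸ h2) hwv

lemma third_unique [Finite α] {S : Set α} (hS : S.ncard ≤ 3) {a b c c' : α}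
    (haS : a ∈ S) (hbS : b ∈ S) (hcS : c ∈ S) (hc'S : c' ∈ S)
    (hab : a ≠ b) (hca : c ≠ a) (hcb : c ≠ b) (hc'a : c' ≠ a) (hc'b : c' ≠ b) :
    c = c' := by
  by_contra hcc
  have hsub : ({a, b, c, c'} : Set α) ⊆ S := by
    intro x hx
    simp only [Set.mem_insert_iff, Set.mem_singleton_iff] at hx
    rcases hx with rfl | rfl | rfl | rfl <;> assumption
  have h2 : ({c, c'} : Set α).ncard = 2 := by
    rw [Set.ncard_insert_of_notMem (by simpa using hcc), Set.ncard_singleton]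
  have h3 : ({b, c, c'} : Set α).ncard = 3 := by
    rw [Set.ncard_insert_of_notMem (by simp [hcb.symm, hc'b.symm]), h2]
  have h4 : ({a, b, c, c'} : Set α).ncard = 4 := by
    rw [Set.ncard_insert_of_notMem (by simp [hab, hca.symm, hc'a.symm]), h3]
  have := Set.ncard_le_ncard hsub (Set.toFinite S)
  omega

end Stmt13Aux

open Stmt13Aux in
theorem stmt13 {α : Type*} [Fintype α] [PartialOrder α]
    (hiso : NoIsolated α) (hL3 : (LSet α).ncard ≤ 3) (hU3 : (USet α).ncard ≤ 3)
    (a b v w : α) (hcrown : IsCrown a b v w)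
    (ha : a ∈ ESet α) (hb : b ∈ ESet α) (hv : v ∈ ESet α) (hw : w ∈ ESet α) :
    IsRetract α {a, b, v, w} ↔
      ∃ p ∈ ({(a, v), (a, w), (b, v), (b, w)} : Set (α × α)),
        ¬ ∃ a2 b2 v2 w2 : α, IsImproperCrownE a2 b2 v2 w2 ∧
          p.1 ∈ ({a2, b2, v2, w2} : Set α) ∧ p.2 ∈ ({a2, b2, v2, w2} : Set α) := by
  obtain ⟨hav, haw, hbv, hbw, hab, hba, hvw, hwv⟩ := hcrown
  have haL : a ∈ LSet α := mem_LSet_of_lt ha hav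
  have hbL : b ∈ LSet α := mem_LSet_of_lt hb hbv
  have hvU : v ∈ USet α := mem_USet_of_lt hv hav
  have hwU : w ∈ USet α := mem_USet_of_lt hw haw
  have hne_ab : a ≠ b := fun e => hab (le_of_eq e)
  have hne_vw : v ≠ w := fun e => hvw (le_of_eq e)
  constructor
  · intro hret
    by_contra hno
    push_neg at hno
    obtain ⟨r, hmono, hid, hrange⟩ := hret
    have hcov1 := hno (a, v) (by simp)
    have hcov2 := hno (a, w) (by simp)
    have hcov3 := hno (b, v) (by simp)
    have hcov4 := hno (b, w) (by simp)
    have hmem : ∀ x, r x = a ∨ r x = b ∨ r x = v ∨ r x = w := by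
      intro x
      have hx : r x ∈ Set.range r := ⟨x, rfl⟩
      rw [hrange] at hx
      simpa using hx
    have hfix : ∀ t ∈ ({a, b, v, w} : Set α), r t = t := by
      intro t ht
      rw [← hrange] at ht
      obtain ⟨x, hx⟩ := ht
      rw [← hx, hid]
    have hfa := hfix a (by simp)
    have hfb := hfix b (by simp)
    have hfv := hfix v (by simp)
    have hfw := hfix w (by simp)
    have E1 := edge_force hmono hmem hfa hfb hfv hfw
      ⟨hav, haw, hbv, hbw, hab, hba, hvw, hwv⟩ hvU hcov1
    have E2 := edge_force (a := a) (b := b) (v := w) (w := v) hmono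
      (fun x => by
        rcases hmem x with h | h | h | h
        exacts [Or.inl h, Or.inr (Or.inl h), Or.inr (Or.inr (Or.inr h)), Or.inr (Or.inr (Or.inl h))]) hfa hfb hfw hfv
      ⟨haw, hav, hbw, hbv, hab, hba, hwv, hvw⟩ hwU hcov2
    have E3 := edge_force (a := b) (b := a) (v := v) (w := w) hmono
      (fun x => by
        rcases hmem x with h | h | h | h
        exacts [Or.inr (Or.inl h), Or.inl h, Or.inr (Or.inr (Or.inl h)), Or.inr (Or.inr (Or.inr h))]) hfb hfa hfv hfw
      ⟨hbv, hbw, hav, haw, hba, hab, hvw, hwv⟩ hvU hcov3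
    have E4 := edge_force (a := b) (b := a) (v := w) (w := v) hmono
      (fun x => by
        rcases hmem x with h | h | h | h
        exacts [Or.inr (Or.inl h), Or.inl h, Or.inr (Or.inr (Or.inr h)), Or.inr (Or.inr (Or.inl h))]) hfb hfa hfw hfv
      ⟨hbw, hbv, haw, hav, hba, hab, hwv, hvw⟩ hwU hcov4
    have hDD : ∀ c c' : α, c ∈ LSet α → c ≠ a → c ≠ b → r c = a →
        c' ∈ LSet α → c' ≠ b → c' ≠ a → r c' = b → False := by
      intro c c' hcL hca hcb hrc hc'L hc'b hc'a hrc'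
      have he : c = c' := third_unique hL3 haL hbL hcL hc'L hne_ab hca hcb hc'a hc'b
      rw [he] at hrc
      exact hne_ab (hrc.symm.trans hrc')
    have hEE : ∀ u u' : α, u ∈ USet α → u ≠ v → u ≠ w → r u = v →
        u' ∈ USet α → u' ≠ w → u' ≠ v → r u' = w → False := by
      intro u u' huU huv huw hru hu'U hu'w hu'v hru'
      have he : u = u' := third_unique hU3 hvU hwU huU hu'U hne_vw huv huw hu'v hu'w
      rw [he] at hru
      exact hne_vw (hru.symm.trans hru')
    rcases E1 with ⟨c, hc⟩ | ⟨u, hu⟩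
    · rcases E3 with ⟨c', hc'⟩ | ⟨u2, hu2⟩
      · exact hDD c c' hc.1 hc.2.1 hc.2.2.1 hc.2.2.2 hc'.1 hc'.2.1 hc'.2.2.1 hc'.2.2.2
      · rcases E4 with ⟨c', hc'⟩ | ⟨u', hu'⟩
        · exact hDD c c' hc.1 hc.2.1 hc.2.2.1 hc.2.2.2 hc'.1 hc'.2.1 hc'.2.2.1 hc'.2.2.2
        · exact hEE u2 u' hu2.1 hu2.2.1 hu2.2.2.1 hu2.2.2.2 hu'.1 hu'.2.1 hu'.2.2.1 hu'.2.2.2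
    · rcases E2 with ⟨c, hc⟩ | ⟨u', hu'⟩
      · rcases E3 with ⟨c', hc'⟩ | ⟨u2, hu2⟩
        · exact hDD c c' hc.1 hc.2.1 hc.2.2.1 hc.2.2.2 hc'.1 hc'.2.1 hc'.2.2.1 hc'.2.2.2
        · rcases E4 with ⟨c', hc'⟩ | ⟨u', hu'⟩
          · exact hDD c c' hc.1 hc.2.1 hc.2.2.1 hc.2.2.2 hc'.1 hc'.2.1 hc'.2.2.1 hc'.2.2.2
          · exact hEE u2 u' hu2.1 hu2.2.1 hu2.2.2.1 hu2.2.2.2 hu'.1 hu'.2.1 hu'.2.2.1 hu'.2.2.2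
      · exact hEE u u' hu.1 hu.2.1 hu.2.2.1 hu.2.2.2 hu'.1 hu'.2.1 hu'.2.2.1 hu'.2.2.2
  · rintro ⟨p, hp, hfree⟩
    simp only [Set.mem_insert_iff, Set.mem_singleton_iff] at hp
    rcases hp with rfl | rfl | rfl | rfl
    · exact retract_of_free a b v w ⟨hav, haw, hbv, hbw, hab, hba, hvw, hwv⟩
        ha hb hv hw hfree
    · have h := retract_of_free a b w v ⟨haw, hav, hbw, hbv, hab, hba, hwv, hvw⟩
        ha hb hw hv hfree
      have hset : ({a, b, w, v} : Set α) = {a, b, v, w} := by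
        ext t
        simp only [Set.mem_insert_iff, Set.mem_singleton_iff]
        tauto
      rwa [hset] at h
    · have h := retract_of_free b a v w ⟨hbv, hbw, hav, haw, hba, hab, hvw, hwv⟩
        hb ha hv hw hfree
      have hset : ({b, a, v, w} : Set α) = {a, b, v, w} := by
        ext t
        simp only [Set.mem_insert_iff, Set.mem_singleton_iff]
        tauto
      rwa [hset] at h
    · have h := retract_of_free b a w v ⟨hbw, hbv, haw, hav, hba, hab, hwv, hvw⟩
        hb ha hw hv hfree
      have hset : ({b, a, w, v} : Set α) = {a, b, v, w} := by
        ext t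
        simp only [Set.mem_insert_iff, Set.mem_singleton_iff]
        tauto
      rwa [hset] at h
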